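/- arXiv:2103.16411 — 2 statements merged into one kernel-verified Lean document; each statement's English description precedes it below -/
import Mathlib

section
/- For the Möbius transformation F_a(z) = (z - a)/(1 - conj(a)·z) with 0 < a < 1 real, and any point p = cos θ + i sin θ on the unit circle with θ ∈ (0, π) ∪ (π, 2π) (i.e., p ≠ ±1), the real part of F_a(p) is strictly less than the real part of p. -/
open Complex

theorem stmt_0 (a : ℝ) (ha0 : 0 < a) (ha1 : a < 1) (p : ℂ)
    (hp : ‖p‖ = 1) (hp1 : p ≠ 1) (hpm1 : p ≠ -1) :
    ((p - (a : ℂ)) / (1 - (a : ℂ) * p)).re < p.re := by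
  have hsq : p.re ^ 2 + p.im ^ 2 = 1 := by
    have h := Complex.sq_norm p
    rw [hp] at h
    simp [Complex.normSq_apply, sq] at h
    linarith [h]
  have hy : p.im ≠ 0 := by
    intro h
    have hx : (p.re - 1) * (p.re + 1) = 0 := by nlinarith
    rcases mul_eq_zero.mp hx with hx1 | hx1
    · exact hp1 (Complex.ext (by simp; linarith) h)
    · exact hpm1 (by apply Complex.ext <;> simp [h] <;> linarith)
  have hy2 : 0 < p.im ^ 2 := by positivity
  rw [Complex.div_re]
  simp only [Complex.normSq_apply, Complex.sub_re, Complex.sub_im, Complex.one_re,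
    Complex.one_im, Complex.mul_re, Complex.mul_im, Complex.ofReal_re, Complex.ofReal_im]
  have hD : 0 < (1 - (a * p.re - 0 * p.im)) * (1 - (a * p.re - 0 * p.im)) + (0 - (a * p.im + 0 * p.re)) * (0 - (a * p.im + 0 * p.re)) := by
    have : (1 - (a * p.re - 0 * p.im)) * (1 - (a * p.re - 0 * p.im)) + (0 - (a * p.im + 0 * p.re)) * (0 - (a * p.im + 0 * p.re))
        = (1 - a * p.re) ^ 2 + (a * p.im) ^ 2 := by ring
    rw [this]
    positivity
  rw [← add_div, div_lt_iff₀ hD]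
  have key : (p.re - a) * (1 - (a * p.re - 0 * p.im)) + (p.im - 0) * (0 - (a * p.im + 0 * p.re))
      = p.re * ((1 - (a * p.re - 0 * p.im)) * (1 - (a * p.re - 0 * p.im)) +
        (0 - (a * p.im + 0 * p.re)) * (0 - (a * p.im + 0 * p.re))) - 2 * a * p.im ^ 2 := by
    linear_combination (a - a ^ 2 * p.re) * hsq
  rw [key]
  nlinarith [mul_pos ha0 hy2]
end

section
/- Let B : 𝔻 → ℂ be integrable with ∫_𝔻 B ≠ 0 and ∫_𝔻 B(z)/z dz defined with nonzero value. Suppose B̃(z) = e^{-2iθ}·B(e^{iθ}·z) for some θ ∈ ℝ, and both B and B̃ satisfy arg ∫_𝔻 B = arg ∫_𝔻 B̃ = 0 and arg ∫_𝔻 B(z)/z dz, arg ∫_𝔻 B̃(z)/z dz ∈ [0, π). Then B̃ = B. -/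
open Complex MeasureTheory Metric

/-- The argument of a complex number, normalized to lie in `[0, 2π)`. -/
noncomputable def arg2pi (z : ℂ) : ℝ :=
  if Complex.arg z < 0 then Complex.arg z + 2 * Real.pi else Complex.arg z

lemma exp_arg2pi_mul_I (z : ℂ) : Complex.exp (arg2pi z * Complex.I) =
    Complex.exp (Complex.arg z * Complex.I) := by
  unfold arg2pi
  split_ifs with h
  · push_cast
    rw [add_mul, Complex.exp_add, Complex.exp_two_pi_mul_I, mul_one]
  · rfl

lemma arg2pi_inj {a b : ℂ} (h : arg2pi a = arg2pi b) (habs : ‖a‖ = ‖b‖) :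
    a = b := by
  have ha := Complex.norm_mul_exp_arg_mul_I a
  have hb := Complex.norm_mul_exp_arg_mul_I b
  rw [← ha, ← hb, ← exp_arg2pi_mul_I a, ← exp_arg2pi_mul_I b, h, habs]

lemma arg2pi_eq_zero {z : ℂ} (h : arg2pi z = 0) : z = (‖z‖ : ℂ) := by
  have harg : Complex.arg z = 0 := by
    unfold arg2pi at h
    split_ifs at h with h'
    · have := Real.pi_pos
      have := Complex.neg_pi_lt_arg z
      linarith
    · exact h
  have := Complex.norm_mul_exp_arg_mul_I z
  rw [harg] at this
  simpa using this.symm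

/-- Rotation invariance of the set integral over the unit ball. -/
lemma rot_integral (g : ℂ → ℂ) (θ : ℝ) :
    (∫ z in ball (0 : ℂ) 1, g (Complex.exp (θ * Complex.I) * z))
      = ∫ z in ball (0 : ℂ) 1, g z := by
  set f : ℂ ≃ₗᵢ[ℝ] ℂ := rotation (Circle.exp θ) with hf
  have hmp : MeasurePreserving f := f.measurePreserving
  have hemb : MeasurableEmbedding f := f.toHomeomorph.measurableEmbedding
  have hpre : f ⁻¹' (ball (0 : ℂ) 1) = ball (0 : ℂ) 1 := by
    ext z
    simp only [Set.mem_preimage, mem_ball, dist_zero_right, hf, rotation_apply]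
    rw [norm_mul]
    simp
  have := hmp.setIntegral_preimage_emb hemb g (ball (0 : ℂ) 1)
  rw [hpre] at this
  rw [← this]
  apply setIntegral_congr_fun measurableSet_ball
  intro z _
  simp [hf, rotation_apply, Circle.coe_exp]

/-- Normalization determines a unique representative: if `B̃(z) = e^{-2iθ} B(e^{iθ}z)` and
both `B` and `B̃` satisfy the normalization conditions on the arguments of `∫ B` and
`∫ B(z)/z`, then `B̃ = B`. -/
theorem stmt_14 (B B' : ℂ → ℂ) (θ : ℝ)
    (hInt : IntegrableOn B (ball (0 : ℂ) 1))
    (hIntz : IntegrableOn (fun z => B z / z) (ball (0 : ℂ) 1))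
    (hB' : ∀ z, B' z = Complex.exp (-(2 * θ) * Complex.I) *
      B (Complex.exp (θ * Complex.I) * z))
    (hne : (∫ z in ball (0 : ℂ) 1, B z) ≠ 0)
    (hzne : (∫ z in ball (0 : ℂ) 1, B z / z) ≠ 0)
    (harg : arg2pi (∫ z in ball (0 : ℂ) 1, B z) = 0)
    (harg' : arg2pi (∫ z in ball (0 : ℂ) 1, B' z) = 0)
    (hargz : arg2pi (∫ z in ball (0 : ℂ) 1, B z / z) ∈ Set.Ico 0 Real.pi)
    (hargz' : arg2pi (∫ z in ball (0 : ℂ) 1, B' z / z) ∈ Set.Ico 0 Real.pi)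
    (hargzeq : arg2pi (∫ z in ball (0 : ℂ) 1, B' z / z)
      = arg2pi (∫ z in ball (0 : ℂ) 1, B z / z)) :
    B' = B := by
  set c : ℂ := Complex.exp (-(2 * θ) * Complex.I) with hc
  set u : ℂ := Complex.exp (θ * Complex.I) with hu
  set A : ℂ := ∫ z in ball (0 : ℂ) 1, B z with hA
  -- ∫ B' = c * ∫ B
  have hIA : (∫ z in ball (0 : ℂ) 1, B' z) = c * A := by
    have : (∫ z in ball (0 : ℂ) 1, B' z)
        = ∫ z in ball (0 : ℂ) 1, c * B (u * z) := by
      apply setIntegral_congr_fun measurableSet_ball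
      intro z _; exact hB' z
    rw [this, integral_const_mul, rot_integral B θ]
  -- both A and c*A are on the nonneg real axis, hence c = 1
  have hA0 := arg2pi_eq_zero harg
  have hA'0 := arg2pi_eq_zero harg'
  rw [hIA] at hA'0
  have hcA : ‖c * A‖ = ‖A‖ := by
    rw [norm_mul, hc, Complex.norm_exp]
    simp [mul_comm]
  have hc1 : c = 1 := by
    have h2 : c * A = 1 * A := by
      rw [hA'0, hcA, ← hA0, one_mul]
    exact mul_right_cancel₀ hne h2
  -- hence exp(2θI) = 1 and u² = 1
  have hu2 : u ^ 2 = 1 := by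
    have : c * u ^ 2 = 1 := by
      rw [hc, hu, sq, ← Complex.exp_add, ← Complex.exp_add]
      ring_nf
      exact Complex.exp_zero
    rwa [hc1, one_mul] at this
  have huu : u = 1 ∨ u = -1 := by
    have h3 : u * u = 1 := by rw [← sq]; exact hu2
    exact mul_self_eq_one_iff.mp h3
  rcases huu with h1 | h1
  · -- u = 1 : B' = B
    funext z
    rw [hB' z, hc1, h1, one_mul, one_mul]
  · -- u = -1 : contradiction via the second integral
    exfalso
    set I0 : ℂ := ∫ z in ball (0 : ℂ) 1, B z / z with hI0
    have hI' : (∫ z in ball (0 : ℂ) 1, B' z / z) = -I0 := by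
      have step1 : (∫ z in ball (0 : ℂ) 1, B' z / z)
          = ∫ z in ball (0 : ℂ) 1, -(B (u * z) / (u * z)) := by
        apply setIntegral_congr_fun measurableSet_ball
        intro z _
        show B' z / z = -(B (u * z) / (u * z))
        rw [hB' z, hc1, one_mul, h1]
        by_cases hz : z = 0
        · simp [hz]
        · field_simp
      rw [step1, integral_neg]
      congr 1
      calc (∫ z in ball (0 : ℂ) 1, B (u * z) / (u * z))
          = ∫ z in ball (0 : ℂ) 1, B z / z := by
            rw [hu]; exact rot_integral (fun w => B w / w) θ
        _ = I0 := rfl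
    rw [hI'] at hargzeq
    have habs : ‖-I0‖ = ‖I0‖ := by simp
    have := arg2pi_inj hargzeq habs
    have : I0 = 0 := by linear_combination (this : -I0 = I0) / (-2)
    exact hzne this
end
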